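/- Let ζ₁,...,ζ_N be complex numbers and define P_N(z) = ∏_{n=N}^{1} [[1, ζ_n z^{-n}], [-ζ̄_n z^n, 1]] (higher index on the left). Then the (2,1) entry of P_N is a Laurent polynomial in z whose coefficient of z^m, for m ≥ 1, equals the sum over all multi-indices 0 < i₁ < j₁ < i₂ < ... < j_r < i_{r+1} ≤ N with ∑ i_* − ∑ j_* = m of the products (−ζ̄_{i₁})ζ_{j₁}···(−ζ̄_{i_r})ζ_{j_r}(−ζ̄_{i_{r+1}}), and the coefficient of z^m vanishes for m ≤ 0. -/

import Mathlib

open scoped Matrix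

/-- The elementary factor `[[1, ζ_n z^{-n}], [-ζ̄_n z^n, 1]]` over Laurent series. -/
noncomputable def rsM (ζ : ℕ → ℂ) (n : ℕ) : Matrix (Fin 2) (Fin 2) (LaurentSeries ℂ) :=
  !![1, HahnSeries.single (-(n : ℤ)) (ζ n);
     HahnSeries.single (n : ℤ) (-(starRingEnd ℂ) (ζ n)), 1]

/-- The truncated product `P_N(z) = ∏_{n=N}^{1} [[1, ζ_n z^{-n}], [-ζ̄_n z^n, 1]]`,
with higher index on the left. -/
noncomputable def rsP (ζ : ℕ → ℂ) : ℕ → Matrix (Fin 2) (Fin 2) (LaurentSeries ℂ)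
  | 0 => 1
  | n + 1 => rsM ζ (n + 1) * rsP ζ n

/-- The product attached to an increasing list of indices, where the positions `p`
with `p % 2 = 0 ↔ firstIsI` play the role of the `i`'s (factor `-ζ̄`), and the other
positions play the role of the `j`'s (factor `ζ`). -/
noncomputable def rsTermProd (ζ : ℕ → ℂ) (firstIsI : Bool) (L : List ℕ) : ℂ :=
  ∏ p ∈ Finset.range L.length,
    if (p % 2 = 0) ↔ firstIsI = true then -(starRingEnd ℂ) (ζ (L.getD p 0))
    else ζ (L.getD p 0)

/-- The signed sum `∑ i_* − ∑ j_*` attached to an increasing list of indices. -/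
def rsTermSum (firstIsI : Bool) (L : List ℕ) : ℤ :=
  ∑ p ∈ Finset.range L.length,
    if (p % 2 = 0) ↔ firstIsI = true then (L.getD p 0 : ℤ) else -(L.getD p 0 : ℤ)

/- ### auxiliary lemmas -/

lemma rs_single_mul_coeff (a b : ℤ) (r : ℂ) (x : HahnSeries ℤ ℂ) :
    (HahnSeries.single a r * x).coeff b = r * x.coeff (b - a) := by
  have := HahnSeries.coeff_single_mul_add (r := r) (x := x) (b := a) (a := b - a)
  rwa [sub_add_cancel] at this

lemma rsTermSum_append (b : Bool) (L : List ℕ) (a : ℕ) :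
    rsTermSum b (L ++ [a]) =
      rsTermSum b L + (if (L.length % 2 = 0) ↔ b = true then (a : ℤ) else -(a : ℤ)) := by
  unfold rsTermSum
  rw [List.length_append, List.length_singleton, Finset.sum_range_succ]
  congr 1
  · refine Finset.sum_congr rfl fun p hp => ?_
    rw [Finset.mem_range] at hp
    rw [List.getD_append _ _ _ _ hp]
  · rw [List.getD_append_right _ _ _ _ le_rfl]
    simp [List.getD]

lemma rsTermProd_append (ζ : ℕ → ℂ) (b : Bool) (L : List ℕ) (a : ℕ) :
    rsTermProd ζ b (L ++ [a]) =
      rsTermProd ζ b L *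
        (if (L.length % 2 = 0) ↔ b = true then -(starRingEnd ℂ) (ζ a) else ζ a) := by
  unfold rsTermProd
  rw [List.length_append, List.length_singleton, Finset.prod_range_succ]
  congr 1
  · refine Finset.prod_congr rfl fun p hp => ?_
    rw [Finset.mem_range] at hp
    rw [List.getD_append _ _ _ _ hp]
  · rw [List.getD_append_right _ _ _ _ le_rfl]
    simp [List.getD]

lemma rsTermSum_cons (b : Bool) (x : ℕ) (L : List ℕ) :
    rsTermSum b (x :: L) = (if b then (x : ℤ) else -(x : ℤ)) + rsTermSum (!b) L := by
  unfold rsTermSum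
  rw [List.length_cons, Finset.sum_range_succ']
  have h1 : ∀ p ∈ Finset.range L.length,
      (if ((p + 1) % 2 = 0 ↔ b = true) then ((x :: L).getD (p + 1) 0 : ℤ)
        else -((x :: L).getD (p + 1) 0 : ℤ)) =
      (if (p % 2 = 0 ↔ (!b) = true) then (L.getD p 0 : ℤ) else -(L.getD p 0 : ℤ)) := by
    intro p _
    have h2 : ((p + 1) % 2 = 0 ↔ b = true) ↔ (p % 2 = 0 ↔ (!b) = true) := by
      rcases b with _ | _ <;> simp <;> omega
    rw [if_congr h2 rfl rfl]
    rfl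
  rw [Finset.sum_congr rfl h1]
  have h0 : (if (0 % 2 = 0 ↔ b = true) then ((x :: L).getD 0 0 : ℤ)
      else -((x :: L).getD 0 0 : ℤ)) = (if b then (x : ℤ) else -(x : ℤ)) := by
    rcases b with _ | _ <;> simp
  rw [h0]
  ring

lemma rsSortInsertMax {T : Finset ℕ} {a : ℕ} (h : ∀ x ∈ T, x < a) :
    (insert a T).sort (· ≤ ·) = T.sort (· ≤ ·) ++ [a] := by
  have ha : a ∉ T := fun hm => lt_irrefl a (h a hm)
  have hperm : List.Perm ((insert a T).sort (· ≤ ·)) (T.sort (· ≤ ·) ++ [a]) := by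
    refine (Finset.sort_perm_toList _ _).trans ((Finset.toList_insert ha).trans ?_)
    refine (List.Perm.cons a (Finset.sort_perm_toList T (· ≤ ·)).symm).trans ?_
    exact List.perm_append_comm (l₁ := [a]) (l₂ := T.sort (· ≤ ·))
  refine List.Perm.eq_of_pairwise' (Finset.pairwise_sort _ _) ?_ hperm
  rw [List.pairwise_append]
  refine ⟨Finset.pairwise_sort _ _, List.pairwise_singleton _ _, fun x hx y hy => ?_⟩
  rw [List.mem_singleton] at hy
  subst hy
  exact le_of_lt (h x ((Finset.mem_sort (· ≤ ·)).mp hx))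

lemma rsAltGe : ∀ (L : List ℕ), List.Pairwise (· < ·) L → L.length % 2 = 1 →
    (L.headD 0 : ℤ) ≤ rsTermSum true L
  | [], _, hl => by simp at hl
  | [a], _, _ => by simp [rsTermSum]
  | [a, b], _, hl => by simp at hl
  | a :: b :: c :: L', hs, hl => by
      rw [List.pairwise_cons] at hs
      obtain ⟨hab, hs2⟩ := hs
      rw [List.pairwise_cons] at hs2
      obtain ⟨hbc, hs3⟩ := hs2
      have ih := rsAltGe (c :: L') hs3 (by
        simp only [List.length_cons] at hl ⊢; omega)
      have hb : b < c := hbc c (by simp)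
      rw [rsTermSum_cons, rsTermSum_cons]
      simp only [Bool.not_true, Bool.not_false, if_true, if_false]
      have hcle : (c : ℤ) ≤ rsTermSum true (c :: L') := by simpa using ih
      simp only [List.headD_cons]
      push_cast
      omega

/- ### the combinatorial sums -/

noncomputable def rsS (ζ : ℕ → ℂ) (r : ℕ) (N : ℕ) (m : ℤ) : ℂ :=
  ∑ T ∈ (Finset.Icc 1 N).powerset.filter
      (fun T => T.card % 2 = r ∧ rsTermSum true (T.sort (· ≤ ·)) = m),
    rsTermProd ζ true (T.sort (· ≤ ·))

lemma rsS_eq (ζ : ℕ → ℂ) (r N : ℕ) (m : ℤ) :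
    rsS ζ r N m = ∑ T ∈ (Finset.Icc 1 N).powerset,
      if T.card % 2 = r ∧ rsTermSum true (T.sort (· ≤ ·)) = m
      then rsTermProd ζ true (T.sort (· ≤ ·)) else 0 := by
  rw [rsS, Finset.sum_filter]

lemma rsIccSucc (N : ℕ) : Finset.Icc 1 (N + 1) = insert (N + 1) (Finset.Icc 1 N) := by
  ext x
  simp only [Finset.mem_Icc, Finset.mem_insert]
  omega

lemma rsPowersetSum (N : ℕ) (f : Finset ℕ → ℂ) :
    ∑ T ∈ (Finset.Icc 1 (N + 1)).powerset, f T =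
      (∑ T ∈ (Finset.Icc 1 N).powerset, f T) +
      ∑ T ∈ (Finset.Icc 1 N).powerset, f (insert (N + 1) T) := by
  have hnot : (N + 1) ∉ Finset.Icc 1 N := by simp
  rw [rsIccSucc, Finset.powerset_insert, Finset.sum_union, Finset.sum_image]
  · intro T hT T' hT' hE
    rw [Finset.mem_coe, Finset.mem_powerset] at hT hT'
    have h1 : (N+1) ∉ T := fun hh => hnot (hT hh)
    have h2 : (N+1) ∉ T' := fun hh => hnot (hT' hh)
    rw [← Finset.erase_insert h1, ← Finset.erase_insert h2, hE]
  · rw [Finset.disjoint_right]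
    intro T hT hT'
    simp only [Finset.mem_image, Finset.mem_powerset] at hT hT'
    obtain ⟨U, hU, rfl⟩ := hT
    exact hnot (hT' (Finset.mem_insert_self _ _))

/- the two recursions for the combinatorial sums -/

lemma rsS_succ_aux (T : Finset ℕ) (N : ℕ) (hT : T ⊆ Finset.Icc 1 N) :
    (insert (N + 1) T).card = T.card + 1 ∧
    (insert (N + 1) T).sort (· ≤ ·) = T.sort (· ≤ ·) ++ [N + 1] := by
  have h : ∀ x ∈ T, x < N + 1 := fun x hx => by
    have := hT hx; rw [Finset.mem_Icc] at this; omega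
  have ha : (N + 1) ∉ T := fun hm => lt_irrefl _ (h _ hm)
  exact ⟨Finset.card_insert_of_notMem ha, rsSortInsertMax h⟩

lemma rsS1_succ (ζ : ℕ → ℂ) (N : ℕ) (m : ℤ) :
    rsS ζ 1 (N + 1) m = rsS ζ 1 N m +
      (-(starRingEnd ℂ) (ζ (N + 1))) * rsS ζ 0 N (m - ((N + 1 : ℕ) : ℤ)) := by
  rw [rsS_eq, rsPowersetSum, ← rsS_eq]
  congr 1
  rw [rsS_eq, Finset.mul_sum]
  refine Finset.sum_congr rfl fun T hT => ?_
  rw [Finset.mem_powerset] at hT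
  obtain ⟨hcard, hsort⟩ := rsS_succ_aux T N hT
  rw [hcard, hsort, rsTermSum_append, rsTermProd_append, Finset.length_sort]
  simp only [eq_self_iff_true, iff_true]
  set S := rsTermSum true (T.sort (· ≤ ·)) with hS
  set P := rsTermProd ζ true (T.sort (· ≤ ·)) with hP
  rcases Nat.even_or_odd T.card with h | h
  · rw [Nat.even_iff] at h
    rw [if_pos h, if_pos h]
    have hc : ((T.card + 1) % 2 = 1 ∧ S + ((N + 1 : ℕ) : ℤ) = m) ↔
        (T.card % 2 = 0 ∧ S = m - ((N + 1 : ℕ) : ℤ)) := by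
      constructor <;> rintro ⟨h1, h2⟩ <;> exact ⟨by omega, by omega⟩
    rw [if_congr hc rfl rfl]
    split_ifs with hx
    · ring
    · ring
  · rw [Nat.odd_iff] at h
    rw [if_neg (by omega : ¬ T.card % 2 = 0), if_neg (by omega : ¬ T.card % 2 = 0)]
    rw [if_neg (by rintro ⟨h1, -⟩; omega), if_neg (by rintro ⟨h1, -⟩; omega)]
    ring

lemma rsS0_succ (ζ : ℕ → ℂ) (N : ℕ) (m : ℤ) :
    rsS ζ 0 (N + 1) m = rsS ζ 0 N m +
      (ζ (N + 1)) * rsS ζ 1 N (m + ((N + 1 : ℕ) : ℤ)) := by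
  rw [rsS_eq, rsPowersetSum, ← rsS_eq]
  congr 1
  rw [rsS_eq, Finset.mul_sum]
  refine Finset.sum_congr rfl fun T hT => ?_
  rw [Finset.mem_powerset] at hT
  obtain ⟨hcard, hsort⟩ := rsS_succ_aux T N hT
  rw [hcard, hsort, rsTermSum_append, rsTermProd_append, Finset.length_sort]
  simp only [eq_self_iff_true, iff_true]
  set S := rsTermSum true (T.sort (· ≤ ·)) with hS
  set P := rsTermProd ζ true (T.sort (· ≤ ·)) with hP
  rcases Nat.even_or_odd T.card with h | h
  · rw [Nat.even_iff] at h
    rw [if_pos h, if_pos h]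
    rw [if_neg (by rintro ⟨h1, -⟩; omega), if_neg (by rintro ⟨h1, -⟩; omega)]
    ring
  · rw [Nat.odd_iff] at h
    rw [if_neg (by omega : ¬ T.card % 2 = 0), if_neg (by omega : ¬ T.card % 2 = 0)]
    have hc : ((T.card + 1) % 2 = 0 ∧ S + -((N + 1 : ℕ) : ℤ) = m) ↔
        (T.card % 2 = 1 ∧ S = m + ((N + 1 : ℕ) : ℤ)) := by
      constructor <;> rintro ⟨h1, h2⟩ <;> exact ⟨by omega, by omega⟩
    rw [if_congr hc rfl rfl]
    split_ifs with hx
    · ring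
    · ring

/- ### main induction -/

lemma rsP_coeff (ζ : ℕ → ℂ) (N : ℕ) : ∀ m : ℤ,
    ((rsP ζ N) 0 0).coeff m = rsS ζ 0 N m ∧ ((rsP ζ N) 1 0).coeff m = rsS ζ 1 N m := by
  induction N with
  | zero =>
      intro m
      have h0 : (Finset.Icc 1 0 : Finset ℕ) = ∅ := by simp
      have hsort0 : (∅ : Finset ℕ).sort (· ≤ ·) = [] := Finset.sort_empty _
      have hsum0 : rsTermSum true [] = 0 := by simp [rsTermSum]
      have hprod0 : rsTermProd ζ true [] = 1 := by simp [rsTermProd]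
      constructor
      · show ((1 : Matrix (Fin 2) (Fin 2) (LaurentSeries ℂ)) 0 0).coeff m = _
        rw [Matrix.one_apply_eq, rsS, h0, Finset.powerset_empty, Finset.filter_singleton]
        by_cases hm : m = 0
        · subst hm
          rw [if_pos ⟨by simp, by rw [hsort0, hsum0]⟩, Finset.sum_singleton, hsort0, hprod0]
          simp [HahnSeries.coeff_one]
        · rw [if_neg (fun hh => hm (by rw [hsort0, hsum0] at hh; exact hh.2.symm)),
            Finset.sum_empty]
          simp [HahnSeries.coeff_one, hm]
      · show ((1 : Matrix (Fin 2) (Fin 2) (LaurentSeries ℂ)) 1 0).coeff m = _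
        rw [Matrix.one_apply_ne (by decide), rsS, h0, Finset.powerset_empty,
          Finset.filter_singleton]
        rw [if_neg (fun hh => by simp at hh), Finset.sum_empty]
        simp
  | succ N ih =>
      intro m
      have e00 : (rsP ζ (N + 1)) 0 0 =
          (rsP ζ N) 0 0 + HahnSeries.single (-((N + 1 : ℕ) : ℤ)) (ζ (N + 1)) * (rsP ζ N) 1 0 := by
        show (rsM ζ (N + 1) * rsP ζ N) 0 0 = _
        rw [Matrix.mul_apply, Fin.sum_univ_two]
        simp [rsM]
      have e10 : (rsP ζ (N + 1)) 1 0 =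
          HahnSeries.single ((N + 1 : ℕ) : ℤ) (-(starRingEnd ℂ) (ζ (N + 1))) * (rsP ζ N) 0 0
            + (rsP ζ N) 1 0 := by
        show (rsM ζ (N + 1) * rsP ζ N) 1 0 = _
        rw [Matrix.mul_apply, Fin.sum_univ_two]
        simp [rsM]
      constructor
      · rw [e00, HahnSeries.coeff_add, rs_single_mul_coeff, (ih m).1,
          (ih (m - -((N + 1 : ℕ) : ℤ))).2, rsS0_succ]
        rw [sub_neg_eq_add]
      · rw [e10, HahnSeries.coeff_add, rs_single_mul_coeff, (ih m).2,
          (ih (m - ((N + 1 : ℕ) : ℤ))).1, rsS1_succ]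
        ring

lemma rsS1_eq_zero (ζ : ℕ → ℂ) (N : ℕ) (m : ℤ) (hm : m ≤ 0) : rsS ζ 1 N m = 0 := by
  rw [rsS]
  apply Finset.sum_eq_zero
  intro T hT
  rw [Finset.mem_filter, Finset.mem_powerset] at hT
  obtain ⟨hsub, hcard, hsum⟩ := hT
  exfalso
  set L := T.sort (· ≤ ·) with hL
  have hlen : L.length = T.card := Finset.length_sort _
  have hne : L ≠ [] := by
    intro h
    rw [h] at hlen
    simp at hlen
    omega
  have hsorted : List.Pairwise (· < ·) L := (Finset.sortedLT_sort T).pairwise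
  have hge := rsAltGe L hsorted (by rw [hlen]; exact hcard)
  have hhead : L.headD 0 ∈ T := by
    have hmem : L.headD 0 ∈ L := by
      rcases L with _ | ⟨x, L'⟩
      · exact absurd rfl hne
      · simp
    rw [hL] at hmem
    exact (Finset.mem_sort (· ≤ ·)).mp hmem
  have h1 : 1 ≤ L.headD 0 := by
    have := hsub hhead
    rw [Finset.mem_Icc] at this
    omega
  rw [hsum] at hge
  have : (1 : ℤ) ≤ L.headD 0 := by exact_mod_cast h1
  omega


/-- The `(2,1)` entry of the truncated product `P_N` is a Laurent polynomial whose
coefficient of `z^m`, for `m ≥ 1`, is the sum over all multi-indices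
`0 < i₁ < j₁ < i₂ < ⋯ < j_r < i_{r+1} ≤ N` (i.e. subsets of `{1,…,N}` of odd
cardinality, listed increasingly, with the `i`'s in the even positions) satisfying
`∑ i_* − ∑ j_* = m`, of `(−ζ̄_{i₁})ζ_{j₁} ⋯ (−ζ̄_{i_r})ζ_{j_r}(−ζ̄_{i_{r+1}})`;
and the coefficient of `z^m` vanishes for `m ≤ 0`. -/
theorem coeff_entry21_of_truncated_product (N : ℕ) (ζ : ℕ → ℂ) :
    (∀ m : ℕ, 1 ≤ m →
      ((rsP ζ N) 1 0).coeff (m : ℤ) =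
        ∑ T ∈ (Finset.Icc 1 N).powerset.filter
            (fun T => T.card % 2 = 1 ∧ rsTermSum true (T.sort (· ≤ ·)) = (m : ℤ)),
          rsTermProd ζ true (T.sort (· ≤ ·))) ∧
    ∀ m : ℤ, m ≤ 0 → ((rsP ζ N) 1 0).coeff m = 0 := by
  constructor
  · intro m _
    exact (rsP_coeff ζ N (m : ℤ)).2
  · intro m hm
    rw [(rsP_coeff ζ N m).2]
    exact rsS1_eq_zero ζ N m hm
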